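/- Let Φ be a finite crystallographic root system in a real inner product space, with Weyl group W, a fixed base Δ, positive roots Φ⁺, and ⟨λ, α∨⟩ = 2(λ,α)/(α,α). Let μ be an integral antidominant weight, i.e., ⟨μ, α∨⟩ is a nonpositive integer for every α ∈ Φ⁺, and set J = {α ∈ Δ : ⟨μ, α∨⟩ = 0}. Then for any w ∈ W the following are equivalent: (a) wγ ∈ Φ⁺ for all γ ∈ J; (b) for every α ∈ Φ⁺, if w⁻¹α ∈ −Φ⁺ then ⟨wμ, α∨⟩ > 0, and if w⁻¹α ∈ Φ⁺ then ⟨wμ, α∨⟩ ≤ 0; (c) {α ∈ Φ⁺ : ⟨wμ, α∨⟩ > 0} = {α ∈ Φ⁺ : w⁻¹α ∈ −Φ⁺}. -/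

import Mathlib

/-- The pairing `⟨x, α∨⟩ = 2(x,α)/(α,α)` in a real inner product space. -/
noncomputable def pairing {E : Type*} [NormedAddCommGroup E] [InnerProductSpace ℝ E]
    (x α : E) : ℝ :=
  2 * (inner ℝ x α : ℝ) / (inner ℝ α α : ℝ)

/-- for a finite crystallographic root system `Φ` with positive system
`Φpos`, base `Δ`, Weyl group `W` (generated by the reflections in the roots), an
integral antidominant weight `μ` and `J = {α ∈ Δ : ⟨μ,α∨⟩ = 0}`, the conditions
(a) `wγ ∈ Φ⁺` for all `γ ∈ J`;
(b) for all `α ∈ Φ⁺`: `w⁻¹α ∈ −Φ⁺ → ⟨wμ,α∨⟩ > 0` and `w⁻¹α ∈ Φ⁺ → ⟨wμ,α∨⟩ ≤ 0`;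
(c) `{α ∈ Φ⁺ : ⟨wμ,α∨⟩ > 0} = {α ∈ Φ⁺ : w⁻¹α ∈ −Φ⁺}`
are equivalent. -/
theorem upper_closure_characterization
    {E : Type*} [NormedAddCommGroup E] [InnerProductSpace ℝ E]
    (Φ Φpos Δ : Set E)
    (hfin : Φ.Finite)
    (h0 : (0 : E) ∉ Φ)
    (hposs : Φpos ⊆ Φ)
    (hnegmem : ∀ α ∈ Φ, -α ∈ Φ)
    (hsplit : ∀ α ∈ Φ, (α ∈ Φpos ↔ -α ∉ Φpos))
    (hΔ : Δ ⊆ Φpos)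
    (hind : LinearIndependent ℝ (fun γ : Δ => (γ : E)))
    (hbase : ∀ α ∈ Φpos, ∃ c : E → ℕ, (∀ γ, c γ ≠ 0 → γ ∈ Δ) ∧
      α = ∑ᶠ γ, (c γ : ℝ) • γ)
    (hcrys : ∀ α ∈ Φ, ∀ β ∈ Φ, ∃ k : ℤ, pairing β α = (k : ℝ))
    (hrefl : ∀ α ∈ Φ, ∀ β ∈ Φ, β - pairing β α • α ∈ Φ)
    (W : Subgroup (E ≃ₗ[ℝ] E))
    (hW : W = Subgroup.closure
      {s : E ≃ₗ[ℝ] E | ∃ α ∈ Φ, ∀ v, s v = v - pairing v α • α})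
    (w : E ≃ₗ[ℝ] E) (hw : w ∈ W)
    (μ : E) (hμ : ∀ α ∈ Φpos, ∃ k : ℤ, k ≤ 0 ∧ pairing μ α = (k : ℝ))
    (J : Set E) (hJ : J = {γ ∈ Δ | pairing μ γ = 0}) :
    ((∀ γ ∈ J, w γ ∈ Φpos) ↔
      (∀ α ∈ Φpos, (-(w.symm α) ∈ Φpos → 0 < pairing (w μ) α) ∧
        (w.symm α ∈ Φpos → pairing (w μ) α ≤ 0))) ∧
    ((∀ γ ∈ J, w γ ∈ Φpos) ↔
      {α ∈ Φpos | 0 < pairing (w μ) α} = {α ∈ Φpos | -(w.symm α) ∈ Φpos}) := by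
  classical
  -- basic positivity facts
  have hip : ∀ α ∈ Φ, (0:ℝ) < inner ℝ α α := by
    intro α hα
    have hne : α ≠ 0 := fun h => h0 (h ▸ hα)
    exact lt_of_le_of_ne real_inner_self_nonneg
      (Ne.symm fun hz => hne (inner_self_eq_zero.mp hz))
  have hΔΦ : Δ ⊆ Φ := fun γ hγ => hposs (hΔ hγ)
  have hΔfin : Δ.Finite := hfin.subset hΔΦ
  set Δfin := hΔfin.toFinset with hΔfin_def
  -- pairing of negated root
  have pneg : ∀ x α : E, pairing x (-α) = - pairing x α := by
    intro x α
    unfold pairing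
    rw [inner_neg_right, inner_neg_neg]
    ring
  -- pairing zero iff inner zero
  have hpz : ∀ β ∈ Φ, ∀ x : E, (pairing x β = 0 ↔ (inner ℝ x β : ℝ) = 0) := by
    intro β hβ x
    have hββ : (inner ℝ β β : ℝ) ≠ 0 := ne_of_gt (hip β hβ)
    unfold pairing
    rw [div_eq_zero_iff]
    constructor
    · rintro (h | h)
      · linarith
      · exact absurd h hββ
    · intro h; left; rw [h]; ring
  -- μ antidominant: nonpositive pairings and inner products
  have hpair_nonpos : ∀ γ ∈ Φpos, pairing μ γ ≤ 0 := by
    intro γ hγ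
    obtain ⟨k, hk, hkeq⟩ := hμ γ hγ
    rw [hkeq]; exact_mod_cast hk
  have hinner_nonpos : ∀ γ ∈ Φpos, (inner ℝ μ γ : ℝ) ≤ 0 := by
    intro γ hγ
    have hγγ : (0:ℝ) < inner ℝ γ γ := hip γ (hposs hγ)
    have hp := hpair_nonpos γ hγ
    by_contra h
    push_neg at h
    have : (0:ℝ) < 2 * (inner ℝ μ γ : ℝ) / (inner ℝ γ γ : ℝ) := div_pos (by linarith) hγγ
    unfold pairing at hp
    linarith
  -- orthogonality of elements of W
  have horth : ∀ g ∈ W, ∀ x y : E, (inner ℝ (g x) (g y) : ℝ) = inner ℝ x y := by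
    rw [hW]
    intro g hg
    induction hg using Subgroup.closure_induction with
    | mem s hs =>
      obtain ⟨α, hα, hsf⟩ := hs
      intro x y
      have hαα : (inner ℝ α α : ℝ) ≠ 0 := ne_of_gt (hip α hα)
      simp only [hsf, pairing, inner_sub_left, inner_sub_right, real_inner_smul_left,
        real_inner_smul_right]
      rw [real_inner_comm α y, real_inner_comm α x]
      field_simp
      ring
    | one => intro x y; rfl
    | mul a b ha hb iha ihb =>
      intro x y
      have h1 : (a * b) x = a (b x) := rfl
      have h2 : (a * b) y = a (b y) := rfl
      rw [h1, h2, iha, ihb]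
    | inv a ha iha =>
      intro x y
      have h1 : ∀ z, a ((a⁻¹ : E ≃ₗ[ℝ] E) z) = z := fun z => a.apply_symm_apply z
      calc (inner ℝ ((a⁻¹ : E ≃ₗ[ℝ] E) x) ((a⁻¹ : E ≃ₗ[ℝ] E) y) : ℝ)
          = inner ℝ (a ((a⁻¹ : E ≃ₗ[ℝ] E) x)) (a ((a⁻¹ : E ≃ₗ[ℝ] E) y)) := (iha _ _).symm
        _ = inner ℝ x y := by rw [h1, h1]
  -- W preserves Φ
  have hsymm_eq : ∀ s : E ≃ₗ[ℝ] E, ∀ α ∈ Φ, (∀ v, s v = v - pairing v α • α) →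
      ∀ v, s.symm v = s v := by
    intro s α hα hs v
    have hαα : (inner ℝ α α : ℝ) ≠ 0 := ne_of_gt (hip α hα)
    have hinvol : ∀ u, s (s u) = u := by
      intro u
      rw [hs, hs]
      have hp : pairing (u - pairing u α • α) α = - pairing u α := by
        simp only [pairing, inner_sub_left, real_inner_smul_left]
        field_simp
        ring
      rw [hp]
      simp [neg_smul]
    calc s.symm v = s.symm (s (s v)) := by rw [hinvol]
      _ = s v := s.symm_apply_apply _
  have hΦinv : ∀ g ∈ W, (∀ β ∈ Φ, g β ∈ Φ) ∧ (∀ β ∈ Φ, g.symm β ∈ Φ) := by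
    rw [hW]
    intro g hg
    induction hg using Subgroup.closure_induction with
    | mem s hs =>
      obtain ⟨α, hα, hsf⟩ := hs
      refine ⟨fun β hβ => ?_, fun β hβ => ?_⟩
      · rw [hsf]; exact hrefl α hα β hβ
      · rw [hsymm_eq s α hα hsf, hsf]; exact hrefl α hα β hβ
    | one => exact ⟨fun β hβ => hβ, fun β hβ => hβ⟩
    | mul a b ha hb iha ihb =>
      exact ⟨fun β hβ => iha.1 _ (ihb.1 β hβ), fun β hβ => ihb.2 _ (iha.2 β hβ)⟩
    | inv a ha iha => exact ⟨iha.2, iha.1⟩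
  -- pairing transfer
  have hpairw' : ∀ α : E, pairing (w μ) α = pairing μ (w.symm α) := by
    intro α
    conv_lhs => rw [← w.apply_symm_apply α]
    unfold pairing
    rw [horth w hw, horth w hw]
  -- linear independence on Δfin
  have lin0 : ∀ f : E → ℝ, ∑ γ ∈ Δfin, f γ • γ = 0 → ∀ γ ∈ Δ, f γ = 0 := by
    intro f hsum γ hγ
    haveI := hΔfin.fintype
    have hconv : ∑ γ ∈ Δfin, f γ • γ = ∑ i : Δ, f i • (i : E) :=
      Finset.sum_subtype _ (fun x => hΔfin.mem_toFinset) _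
    exact Fintype.linearIndependent_iff.mp hind (fun i => f i) (by rw [← hconv, hsum]) ⟨γ, hγ⟩
  -- the cone of nonnegative combinations of Δ
  set Cone : Set E := {v | ∃ e : E → ℝ, (∀ γ, 0 ≤ e γ) ∧ (∀ γ, e γ ≠ 0 → γ ∈ Δ) ∧
    v = ∑ γ ∈ Δfin, e γ • γ} with hCone
  have cone_pos : ∀ α ∈ Φpos, ∃ c : E → ℕ, (∀ γ, c γ ≠ 0 → γ ∈ Δ) ∧
      α = ∑ γ ∈ Δfin, (c γ : ℝ) • γ := by
    intro α hα
    obtain ⟨c, hc, hceq⟩ := hbase α hα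
    refine ⟨c, hc, ?_⟩
    rw [hceq]
    apply finsum_eq_sum_of_support_subset
    intro γ hγ
    rw [hΔfin_def, hΔfin.coe_toFinset]
    by_contra hmem
    have hc0 : c γ = 0 := by by_contra h; exact hmem (hc γ h)
    simp [hc0] at hγ
  have cone_posmem : ∀ α ∈ Φpos, α ∈ Cone := by
    intro α hα
    obtain ⟨c, hc, hceq⟩ := cone_pos α hα
    exact ⟨fun γ => (c γ : ℝ), fun γ => by positivity,
      fun γ h => hc γ (fun h' => h (by simp [h'])), hceq⟩
  have cone_zero : (0:E) ∈ Cone := by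
    refine ⟨fun _ => 0, fun _ => le_refl _, fun γ h => absurd rfl h, ?_⟩
    simp
  have cone_add : ∀ u ∈ Cone, ∀ v ∈ Cone, u + v ∈ Cone := by
    rintro u ⟨e, he0, heΔ, heq⟩ v ⟨e', he0', heΔ', heq'⟩
    refine ⟨fun γ => e γ + e' γ, fun γ => add_nonneg (he0 γ) (he0' γ), ?_, ?_⟩
    · intro γ h
      by_cases h1 : e γ = 0
      · exact heΔ' γ (by simpa [h1] using h)
      · exact heΔ γ h1
    · rw [heq, heq', ← Finset.sum_add_distrib]
      exact Finset.sum_congr rfl fun γ _ => (add_smul _ _ _).symm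
  have cone_smul : ∀ t : ℝ, 0 ≤ t → ∀ v ∈ Cone, t • v ∈ Cone := by
    rintro t ht v ⟨e, he0, heΔ, heq⟩
    refine ⟨fun γ => t * e γ, fun γ => mul_nonneg ht (he0 γ), ?_, ?_⟩
    · intro γ h
      exact heΔ γ (fun h' => h (by simp [h']))
    · rw [heq, Finset.smul_sum]
      exact Finset.sum_congr rfl fun γ _ => (smul_smul _ _ _)
  have cone_sum : ∀ (s : Finset E) (f : E → E), (∀ x ∈ s, f x ∈ Cone) →
      ∑ x ∈ s, f x ∈ Cone := by
    intro s
    induction s using Finset.induction with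
    | empty => intro f _; simpa using cone_zero
    | insert _ _ hx ih =>
      intro f hf
      rw [Finset.sum_insert hx]
      exact cone_add _ (hf _ (Finset.mem_insert_self _ _)) _
        (ih f fun x hxs => hf x (Finset.mem_insert_of_mem hxs))
  have cone_root_pos : ∀ α ∈ Φ, α ∈ Cone → α ∈ Φpos := by
    intro α hα hc
    by_contra hneg
    have hnegpos : -α ∈ Φpos := by
      by_contra h; exact hneg ((hsplit α hα).mpr h)
    obtain ⟨e, he0, heΔ, heq⟩ := hc
    obtain ⟨e', he0', heΔ', heq'⟩ := cone_posmem _ hnegpos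
    have hzero : ∑ γ ∈ Δfin, (e γ + e' γ) • γ = 0 := by
      have : ∑ γ ∈ Δfin, (e γ + e' γ) • γ
          = (∑ γ ∈ Δfin, e γ • γ) + ∑ γ ∈ Δfin, e' γ • γ := by
        rw [← Finset.sum_add_distrib]
        exact Finset.sum_congr rfl fun γ _ => add_smul _ _ _
      rw [this, ← heq, ← heq']
      simp
    have hall := lin0 _ hzero
    have hα0 : α = 0 := by
      rw [heq]
      apply Finset.sum_eq_zero
      intro γ hγ
      have hγΔ : γ ∈ Δ := hΔfin.mem_toFinset.mp hγ
      have h1 : e γ = 0 := by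
        have := hall γ hγΔ
        have := he0 γ
        have := he0' γ
        linarith
      rw [h1, zero_smul]
    exact h0 (hα0 ▸ hα)
  -- the key claim
  have hkey : ∀ β ∈ Φpos, (∀ γ ∈ J, w γ ∈ Φpos) → pairing μ β = 0 → w β ∈ Φpos := by
    intro β hβ ha hp0
    obtain ⟨c, hc, hβsum⟩ := cone_pos β hβ
    have hinner0 : (inner ℝ μ β : ℝ) = 0 := (hpz β (hposs hβ) μ).mp hp0
    have hsum0 : ∑ γ ∈ Δfin, (c γ:ℝ) * (inner ℝ μ γ:ℝ) = 0 := by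
      rw [← hinner0, hβsum, inner_sum]
      exact Finset.sum_congr rfl fun γ _ => (real_inner_smul_right _ _ _).symm
    have hnonpos : ∀ γ ∈ Δfin, (c γ:ℝ) * (inner ℝ μ γ:ℝ) ≤ 0 := by
      intro γ hγ
      have hγΔ : γ ∈ Δ := hΔfin.mem_toFinset.mp hγ
      have h1 : (0:ℝ) ≤ (c γ : ℝ) := by positivity
      have h2 := hinner_nonpos γ (hΔ hγΔ)
      exact mul_nonpos_of_nonneg_of_nonpos h1 h2
    have hterms := (Finset.sum_eq_zero_iff_of_nonpos hnonpos).mp hsum0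
    have hwγ : ∀ γ ∈ Δfin, c γ ≠ 0 → w γ ∈ Φpos := by
      intro γ hγ hcγ
      have hγΔ : γ ∈ Δ := hc γ hcγ
      apply ha
      rw [hJ]
      refine ⟨hγΔ, ?_⟩
      have hi0 : (inner ℝ μ γ : ℝ) = 0 := by
        rcases mul_eq_zero.mp (hterms γ hγ) with h | h
        · exact absurd (by exact_mod_cast h) hcγ
        · exact h
      exact (hpz γ (hposs (hΔ hγΔ)) μ).mpr hi0
    have hwβ : w β = ∑ γ ∈ Δfin, (c γ:ℝ) • w γ := by
      rw [hβsum, map_sum]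
      exact Finset.sum_congr rfl fun γ _ => map_smul w _ _
    have hwβΦ : w β ∈ Φ := (hΦinv w hw).1 β (hposs hβ)
    apply cone_root_pos _ hwβΦ
    rw [hwβ]
    apply cone_sum
    intro γ hγ
    by_cases hcγ : c γ = 0
    · simpa [hcγ] using cone_zero
    · exact cone_smul _ (by positivity) _ (cone_posmem _ (hwγ γ hγ hcγ))
  -- (b) second part, always true
  have hb2 : ∀ α ∈ Φpos, w.symm α ∈ Φpos → pairing (w μ) α ≤ 0 := by
    intro α hα hs
    rw [hpairw']
    exact hpair_nonpos _ hs
  -- (a) implies first part of (b)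
  have hAB : (∀ γ ∈ J, w γ ∈ Φpos) →
      ∀ α ∈ Φpos, -(w.symm α) ∈ Φpos → 0 < pairing (w μ) α := by
    intro ha α hα hnwα
    rw [hpairw']
    have hne : pairing μ (-(w.symm α)) ≠ 0 := by
      intro h
      have hwmem : w (-(w.symm α)) ∈ Φpos := hkey _ hnwα ha h
      have heq : w (-(w.symm α)) = -α := by rw [map_neg, w.apply_symm_apply]
      rw [heq] at hwmem
      exact ((hsplit α (hposs hα)).mp hα) hwmem
    have hlt : pairing μ (-(w.symm α)) < 0 :=
      lt_of_le_of_ne (hpair_nonpos _ hnwα) hne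
    have hpn := pneg μ (-(w.symm α))
    rw [neg_neg] at hpn
    linarith
  -- first part of (b) implies (a)
  have hBA : (∀ α ∈ Φpos, -(w.symm α) ∈ Φpos → 0 < pairing (w μ) α) →
      ∀ γ ∈ J, w γ ∈ Φpos := by
    intro hb γ hγ
    rw [hJ] at hγ
    obtain ⟨hγΔ, hγ0⟩ := hγ
    by_contra hneg
    have hγΦ : γ ∈ Φ := hposs (hΔ hγΔ)
    have hwγΦ : w γ ∈ Φ := (hΦinv w hw).1 γ hγΦ
    have hαpos : -(w γ) ∈ Φpos := by
      by_contra h; exact hneg ((hsplit (w γ) hwγΦ).mpr h)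
    have hsymm : w.symm (-(w γ)) = -γ := by rw [map_neg, w.symm_apply_apply]
    have h1 : -(w.symm (-(w γ))) ∈ Φpos := by rw [hsymm, neg_neg]; exact hΔ hγΔ
    have h2 := hb _ hαpos h1
    rw [hpairw', hsymm, pneg, hγ0] at h2
    simp at h2
  constructor
  · constructor
    · intro ha α hα
      exact ⟨hAB ha α hα, hb2 α hα⟩
    · intro hb
      exact hBA fun α hα => (hb α hα).1
  · constructor
    · intro ha
      ext α
      simp only [Set.mem_setOf_eq]
      constructor
      · rintro ⟨hα, hlt⟩
        refine ⟨hα, ?_⟩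
        have hsΦ : w.symm α ∈ Φ := (hΦinv w hw).2 α (hposs hα)
        by_contra h
        have hspos : w.symm α ∈ Φpos := (hsplit _ hsΦ).mpr h
        have := hb2 α hα hspos
        linarith
      · rintro ⟨hα, h⟩
        exact ⟨hα, hAB ha α hα h⟩
    · intro hc
      apply hBA
      intro α hα h
      have hmem : α ∈ {α ∈ Φpos | -(w.symm α) ∈ Φpos} := ⟨hα, h⟩
      rw [← hc] at hmem
      exact hmem.2
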